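/- Let β > 1 and h > 0, let m₀ ∈ (0,1) be the largest solution in (−1,1) of the Curie-Weiss equation m = tanh(β(m+h)), and let 0 < δ < 1/2. Then lim_{n→∞} sup { |4(P₊ⁿ(η) + P₋ⁿ(η)) − σ(h,β)²| : η ∈ ℝ, |η| ≤ n^δ, |m₀ + n^{−1/2}η| ≤ 1 } = 0, where σ(h,β) := 2√(1 − m₀). (In words: the one-step second moment n·E_η[(Y − η)²] of the Metropolis-Hastings chain converges to σ(h,β)² = 4(1 − m₀) uniformly for |η| ≤ n^δ.) -/

import Mathlib

/-- Proposal probability of an up-move: `Q₊ⁿ(η) = ½(1 - (m₀ + n^{-1/2}η))`. -/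
noncomputable def Qplus (m₀ : ℝ) (n : ℕ) (η : ℝ) : ℝ :=
  (1 - (m₀ + η / Real.sqrt n)) / 2

/-- Proposal probability of a down-move: `Q₋ⁿ(η) = ½(1 + (m₀ + n^{-1/2}η))`. -/
noncomputable def Qminus (m₀ : ℝ) (n : ℕ) (η : ℝ) : ℝ :=
  (1 + (m₀ + η / Real.sqrt n)) / 2

/-- Potential `Φⁿ(η) = -½η² - √n (m₀ + h) η`. -/
noncomputable def Phi (m₀ h : ℝ) (n : ℕ) (η : ℝ) : ℝ :=
  -(1 / 2) * η ^ 2 - Real.sqrt n * (m₀ + h) * η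

/-- Metropolis-Hastings up-move probability
`P₊ⁿ(η) = Q₊ⁿ(η) · min(1, exp(β[Φⁿ(η) - Φⁿ(η + 2n^{-1/2})]))`. -/
noncomputable def Pplus (β h m₀ : ℝ) (n : ℕ) (η : ℝ) : ℝ :=
  Qplus m₀ n η *
    min 1 (Real.exp (β * (Phi m₀ h n η - Phi m₀ h n (η + 2 / Real.sqrt n))))

/-- Metropolis-Hastings down-move probability
`P₋ⁿ(η) = Q₋ⁿ(η) · min(1, exp(β[Φⁿ(η) - Φⁿ(η - 2n^{-1/2})]))`. -/
noncomputable def Pminus (β h m₀ : ℝ) (n : ℕ) (η : ℝ) : ℝ :=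
  Qminus m₀ n η *
    min 1 (Real.exp (β * (Phi m₀ h n η - Phi m₀ h n (η - 2 / Real.sqrt n))))

/-- `m₀` is the largest solution in `(-1,1)` of the Curie-Weiss equation
`m = tanh(β(m+h))`, and it lies in `(0,1)`. -/
def IsLargestCWRoot (β h m₀ : ℝ) : Prop :=
  m₀ ∈ Set.Ioo (0 : ℝ) 1 ∧ m₀ = Real.tanh (β * (m₀ + h)) ∧
    ∀ m ∈ Set.Ioo (-1 : ℝ) 1, m = Real.tanh (β * (m + h)) → m ≤ m₀

set_option maxHeartbeats 1000000 in
/-- uniform second-moment convergence: for `β > 1`, `h > 0`, `m₀` the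
largest solution of the Curie-Weiss equation, `0 < δ < 1/2` and `σ(h,β) = 2√(1-m₀)`,
the one-step second moment `n·E_η[(Y-η)²] = 4(P₊ⁿ(η) + P₋ⁿ(η))` converges to
`σ(h,β)² = 4(1-m₀)` uniformly over `{η : |η| ≤ n^δ, |m₀ + n^{-1/2}η| ≤ 1}`, i.e.
`lim_{n→∞} sup |4(P₊ⁿ(η) + P₋ⁿ(η)) - σ(h,β)²| = 0`. -/
theorem metropolis_second_moment_limit (β h m₀ δ : ℝ) (hβ : 1 < β) (hh : 0 < h)
    (hm₀ : IsLargestCWRoot β h m₀) (hδ : 0 < δ) (hδ' : δ < 1 / 2) :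
    ∀ ε > (0 : ℝ), ∀ᶠ n : ℕ in Filter.atTop,
      ∀ η : ℝ, |η| ≤ (n : ℝ) ^ δ → |m₀ + η / Real.sqrt n| ≤ 1 →
        |4 * (Pplus β h m₀ n η + Pminus β h m₀ n η) -
          (2 * Real.sqrt (1 - m₀)) ^ 2| < ε := by
  obtain ⟨⟨hm0, hm1⟩, heq, -⟩ := hm₀
  have hβ0 : 0 < β := by linarith
  -- the key Curie-Weiss identity
  have hc : (1 + m₀) * Real.exp (-(2 * (β * (m₀ + h)))) = 1 - m₀ := by
    set a := Real.exp (β * (m₀ + h)) with ha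
    set b := Real.exp (-(β * (m₀ + h))) with hb
    have hab : a * b = 1 := by
      rw [ha, hb, ← Real.exp_add]; simp
    have hcosh : 0 < Real.cosh (β * (m₀ + h)) := Real.cosh_pos _
    have hm : m₀ * (a + b) = a - b := by
      have h1 := heq
      rw [Real.tanh_eq_sinh_div_cosh, Real.sinh_eq, Real.cosh_eq] at h1
      rw [← ha, ← hb] at h1
      have hab0 : a + b > 0 := by positivity
      field_simp at h1
      linarith
    have hb2 : Real.exp (-(2 * (β * (m₀ + h)))) = b * b := by
      rw [hb, ← Real.exp_add]; ring_nf
    rw [hb2]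
    linear_combination b * hm + (1 - m₀) * hab
  intro ε hε
  have he1 : (1:ℝ) ≤ Real.exp 1 := by
    have := Real.add_one_le_exp 1; linarith [Real.exp_pos 1]
  set C : ℝ := 2 + 16 * β + 2 * Real.exp 1 with hC
  have hCpos : 0 < C := by positivity
  set κ : ℝ := min (min ((m₀ + h) / 2) (1 / (4 * β))) (ε / (2 * C)) with hκ
  have hκpos : 0 < κ := by
    apply lt_min (lt_min (by linarith) (by positivity)) (by positivity)
  have hκ1 : κ ≤ (m₀ + h) / 2 := le_trans (min_le_left _ _) (min_le_left _ _)
  have hκ2 : κ ≤ 1 / (4 * β) := le_trans (min_le_left _ _) (min_le_right _ _)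
  have hκ3 : κ ≤ ε / (2 * C) := min_le_right _ _
  have hrt : Filter.Tendsto (fun n : ℕ => (n : ℝ) ^ (δ - 1/2)) Filter.atTop (nhds 0) := by
    have : Filter.Tendsto (fun n : ℕ => (n : ℝ) ^ (-(1/2 - δ))) Filter.atTop (nhds 0) :=
      (tendsto_rpow_neg_atTop (by linarith)).comp tendsto_natCast_atTop_atTop
    convert this using 2; ring
  have h1 := hrt.eventually_lt_const hκpos
  have h2 := tendsto_one_div_atTop_nhds_zero_nat.eventually_lt_const hκpos
  filter_upwards [h1, h2, Filter.eventually_ge_atTop 1] with n hrn hin hn1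
  intro η hη _
  clear h1 h2 hrt
  clear_value C κ
  clear hκ
  have hnpos : (0:ℝ) < n := by exact_mod_cast hn1
  have hs : 0 < Real.sqrt n := Real.sqrt_pos.mpr hnpos
  have hs2 : Real.sqrt n * Real.sqrt n = (n:ℝ) := Real.mul_self_sqrt hnpos.le
  set t : ℝ := η / Real.sqrt n with htdef
  have ht : |t| < κ := by
    have h3 : |t| ≤ (n:ℝ) ^ (δ - 1/2) := by
      rw [htdef, abs_div, abs_of_pos hs, Real.rpow_sub hnpos,
        ← Real.sqrt_eq_rpow]
      exact div_le_div_of_nonneg_right hη hs.le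
    linarith
  have hinv : 1 / (n:ℝ) < κ := hin
  have hinv0 : 0 < 1 / (n:ℝ) := by positivity
  have h2n0 : (0:ℝ) < 2 / (n:ℝ) := by positivity
  have hinv2 : 2 / (n:ℝ) < 2 * κ := by
    rw [div_lt_iff₀ hnpos] at hinv ⊢
    linarith
  -- Phi differences
  have hdp : Phi m₀ h n η - Phi m₀ h n (η + 2 / Real.sqrt n)
      = 2 * t + 2 / n + 2 * (m₀ + h) := by
    have : Phi m₀ h n η - Phi m₀ h n (η + 2 / Real.sqrt n)
        = 2 * t + 2 / (Real.sqrt n * Real.sqrt n) + 2 * (m₀ + h) := by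
      have hs2' : Real.sqrt n ^ 2 = (n:ℝ) := by rw [sq, hs2]
      simp only [Phi, htdef]
      field_simp
      ring
    rw [this, hs2]
  have hdm : Phi m₀ h n η - Phi m₀ h n (η - 2 / Real.sqrt n)
      = -(2 * t) + 2 / n - 2 * (m₀ + h) := by
    have : Phi m₀ h n η - Phi m₀ h n (η - 2 / Real.sqrt n)
        = -(2 * t) + 2 / (Real.sqrt n * Real.sqrt n) - 2 * (m₀ + h) := by
      have hs2' : Real.sqrt n ^ 2 = (n:ℝ) := by rw [sq, hs2]
      simp only [Phi, htdef]
      field_simp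
      ring
    rw [this, hs2]
  -- up move: acceptance probability 1
  have hPp : Pplus β h m₀ n η = (1 - (m₀ + t)) / 2 := by
    rw [Pplus, hdp, min_eq_left, mul_one, Qplus]
    have h0 : (0:ℝ) ≤ 2 * t + 2 / n + 2 * (m₀ + h) := by
      have := neg_abs_le t
      have := abs_nonneg t
      linarith
    exact Real.one_le_exp (mul_nonneg hβ0.le h0)
  -- down move
  set u : ℝ := β * (2 / n - 2 * t) with hu
  have hPm : Pminus β h m₀ n η
      = (1 + (m₀ + t)) / 2 * (Real.exp (-(2 * (β * (m₀ + h)))) * Real.exp u) := by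
    rw [Pminus, hdm, min_eq_right, Qminus, ← Real.exp_add]
    · congr 1
      rw [hu]; ring
    · have harg : β * (-(2 * t) + 2 / n - 2 * (m₀ + h)) ≤ 0 := by
        apply mul_nonpos_of_nonneg_of_nonpos hβ0.le
        have := neg_abs_le t
        have := abs_nonneg t
        linarith
      exact (Real.exp_le_exp.mpr harg).trans_eq Real.exp_zero
  set c : ℝ := Real.exp (-(2 * (β * (m₀ + h)))) with hcc
  have hcpos : 0 < c := Real.exp_pos _
  have hcle : c ≤ 1 := by nlinarith [hc]
  -- bounds on u
  have hub : |u| ≤ β * (2 / n + 2 * |t|) := by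
    rw [hu, abs_mul, abs_of_pos hβ0]
    have : |2 / (n:ℝ) - 2 * t| ≤ 2 / n + 2 * |t| := by
      calc |2 / (n:ℝ) - 2 * t| ≤ |2 / (n:ℝ)| + |2 * t| := abs_sub _ _
        _ = 2 / n + 2 * |t| := by rw [abs_of_pos h2n0, abs_mul, abs_two]
    exact mul_le_mul_of_nonneg_left this hβ0.le
  have hu4 : |u| ≤ 4 * β * κ := by
    have h4 : 2 / (n:ℝ) + 2 * |t| ≤ 4 * κ := by
      linarith
    calc |u| ≤ β * (2 / n + 2 * |t|) := hub
      _ ≤ β * (4 * κ) := mul_le_mul_of_nonneg_left h4 hβ0.le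
      _ = 4 * β * κ := by ring
  have hu1 : |u| ≤ 1 := by
    have : 4 * β * κ ≤ 1 := by
      have := mul_le_mul_of_nonneg_left hκ2 (by positivity : (0:ℝ) ≤ 4 * β)
      calc 4 * β * κ ≤ 4 * β * (1 / (4 * β)) := this
        _ = 1 := by field_simp
    linarith
  have heu : Real.exp u ≤ Real.exp 1 :=
    Real.exp_le_exp.mpr (le_trans (le_abs_self u) hu1)
  have heu1 : |Real.exp u - 1| ≤ 2 * |u| := Real.abs_exp_sub_one_le hu1
  have heupos : 0 < Real.exp u := Real.exp_pos u
  -- the difference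
  have hsq : (2 * Real.sqrt (1 - m₀)) ^ 2 = 4 * (1 - m₀) := by
    rw [mul_pow, Real.sq_sqrt (by linarith)]; ring
  have hkey : 4 * (Pplus β h m₀ n η + Pminus β h m₀ n η) - (2 * Real.sqrt (1 - m₀)) ^ 2
      = -(2 * t) + 2 * (1 - m₀) * (Real.exp u - 1) + 2 * c * t * Real.exp u := by
    rw [hsq, hPp, hPm]
    linear_combination 2 * Real.exp u * hc
  rw [hkey]
  have hb1 : |(-(2 * t))| ≤ 2 * |t| := by rw [abs_neg, abs_mul, abs_two]
  have hb2 : |2 * (1 - m₀) * (Real.exp u - 1)| ≤ 2 * 1 * (2 * |u|) := by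
    rw [abs_mul, abs_mul, abs_two, abs_of_pos (by linarith : (0:ℝ) < 1 - m₀)]
    calc 2 * (1 - m₀) * |Real.exp u - 1|
        ≤ 2 * (1 - m₀) * (2 * |u|) :=
          mul_le_mul_of_nonneg_left heu1 (by linarith)
      _ ≤ 2 * 1 * (2 * |u|) :=
          mul_le_mul_of_nonneg_right (by linarith) (by positivity)
  have hb3 : |2 * c * t * Real.exp u| ≤ 2 * |t| * Real.exp 1 := by
    rw [abs_mul, abs_mul, abs_mul, abs_two, abs_of_pos hcpos, abs_of_pos heupos]
    calc 2 * c * |t| * Real.exp u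
        ≤ 2 * 1 * |t| * Real.exp u :=
          mul_le_mul_of_nonneg_right
            (mul_le_mul_of_nonneg_right
              (mul_le_mul_of_nonneg_left hcle (by norm_num)) (abs_nonneg t))
            heupos.le
      _ = 2 * |t| * Real.exp u := by ring
      _ ≤ 2 * |t| * Real.exp 1 :=
          mul_le_mul_of_nonneg_left heu (by positivity)
  calc |(-(2 * t)) + 2 * (1 - m₀) * (Real.exp u - 1) + 2 * c * t * Real.exp u|
      ≤ |(-(2 * t)) + 2 * (1 - m₀) * (Real.exp u - 1)| + |2 * c * t * Real.exp u| :=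
        abs_add_le _ _
    _ ≤ |(-(2 * t))| + |2 * (1 - m₀) * (Real.exp u - 1)| + |2 * c * t * Real.exp u| := by
        linarith [abs_add_le (-(2 * t)) (2 * (1 - m₀) * (Real.exp u - 1))]
    _ ≤ 2 * |t| + 2 * 1 * (2 * |u|) + 2 * |t| * Real.exp 1 := by linarith
    _ < C * κ := by
        have e1pos : (0:ℝ) < Real.exp 1 := Real.exp_pos 1
        have hx1 : 2 * |t| * Real.exp 1 < 2 * κ * Real.exp 1 :=
          mul_lt_mul_of_pos_right (by linarith) e1pos
        have hx2 : C * κ = 2 * κ + 16 * β * κ + 2 * κ * Real.exp 1 := by rw [hC]; ring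
        linarith
    _ ≤ ε / 2 := by
        have := mul_le_mul_of_nonneg_left hκ3 hCpos.le
        calc C * κ ≤ C * (ε / (2 * C)) := this
          _ = ε / 2 := by field_simp
    _ < ε := by linarith
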